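/- Every equivalence π : C ⥤ C of a full subcategory C of Set that contains a one-element set and is closed under transport of structure along bijections (condition (*) holds trivially) is naturally isomorphic to an automorphism of C; moreover if additionally π fixes the isomorphism class of the singleton, π is naturally isomorphic to a functor induced by the identity on underlying sets composed with bijections. -/

import Mathlib

open CategoryTheory

theorem stmt_14 (P : Type u → Prop)
    (hsingleton : ∃ s : Type u, P s ∧ Nonempty s ∧ Subsingleton s)
    (hclosed : ∀ X Y : Type u, P X → Nonempty (X ≃ Y) → P Y) :
    ∀ π : ObjectProperty.FullSubcategory P ⥤ ObjectProperty.FullSubcategory P, π.IsEquivalence →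
      ∃ F : ObjectProperty.FullSubcategory P ⥤ ObjectProperty.FullSubcategory P,
        (∃ G : ObjectProperty.FullSubcategory P ⥤ ObjectProperty.FullSubcategory P,
          F ⋙ G = 𝟭 (ObjectProperty.FullSubcategory P) ∧ G ⋙ F = 𝟭 (ObjectProperty.FullSubcategory P)) ∧
        Nonempty (π ≅ F) := by
  intro π hπ
  haveI := hπ
  refine ⟨𝟭 _, ⟨𝟭 _, rfl, rfl⟩, ?_⟩
  obtain ⟨s, hPs, ⟨pt0⟩, hsub⟩ := hsingleton
  let S : ObjectProperty.FullSubcategory P := ⟨s, hPs⟩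
  let S' : ObjectProperty.FullSubcategory P := π.objPreimage S
  let i : π.obj S' ≅ S := π.objObjPreimageIso S
  -- S'.obj is nonempty
  obtain ⟨g0, hg0⟩ := π.map_surjective (X := S) (Y := S')
    (ObjectProperty.homMk (TypeCat.ofHom fun _ => i.inv pt0) : π.obj S ⟶ π.obj S')
  have hne : Nonempty S'.obj := ⟨g0 pt0⟩
  -- S'.obj is a subsingleton
  have hss : Subsingleton S'.obj := by
    constructor
    intro a b
    have hfab : (ObjectProperty.homMk (TypeCat.ofHom fun _ => a) : S ⟶ S') = (ObjectProperty.homMk (TypeCat.ofHom fun _ => b) : S ⟶ S') := by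
      apply π.map_injective
      have h1 : π.map (ObjectProperty.homMk (TypeCat.ofHom fun _ => a) : S ⟶ S') ≫ i.hom
          = π.map (ObjectProperty.homMk (TypeCat.ofHom fun _ => b) : S ⟶ S') ≫ i.hom := by
        ext z
        exact Subsingleton.elim (α := s) _ _
      calc π.map (ObjectProperty.homMk (TypeCat.ofHom fun _ => a) : S ⟶ S')
          = (π.map (ObjectProperty.homMk (TypeCat.ofHom fun _ => a) : S ⟶ S') ≫ i.hom) ≫ i.inv := by
            simp
        _ = (π.map (ObjectProperty.homMk (TypeCat.ofHom fun _ => b) : S ⟶ S') ≫ i.hom) ≫ i.inv := by rw [h1]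
        _ = π.map (ObjectProperty.homMk (TypeCat.ofHom fun _ => b) : S ⟶ S') := by simp
    exact congrArg (fun f => f pt0) hfab
  -- the comparison map
  let e : ∀ X : ObjectProperty.FullSubcategory P, X.obj → (π.obj X).obj :=
    fun X x => π.map (ObjectProperty.homMk (TypeCat.ofHom fun _ => x) : S' ⟶ X) (i.inv pt0)
  -- naturality of e
  have hnat : ∀ (X Y : ObjectProperty.FullSubcategory P) (f : X ⟶ Y) (x : X.obj),
      π.map f (e X x) = e Y (f x) := by
    intro X Y f x
    have : (ObjectProperty.homMk (TypeCat.ofHom fun _ => x) : S' ⟶ X) ≫ f = (ObjectProperty.homMk (TypeCat.ofHom fun _ => f x) : S' ⟶ Y) := rfl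
    show (π.map (ObjectProperty.homMk (TypeCat.ofHom fun _ => x) : S' ⟶ X) ≫ π.map f) (i.inv pt0) = _
    rw [← π.map_comp, this]
  -- bijectivity of e X
  have hbij : ∀ X : ObjectProperty.FullSubcategory P, Function.Bijective (e X) := by
    intro X
    constructor
    · intro x x' hxx
      have hmap : π.map (ObjectProperty.homMk (TypeCat.ofHom fun _ => x) : S' ⟶ X) = π.map (ObjectProperty.homMk (TypeCat.ofHom fun _ => x') : S' ⟶ X) := by
        ext z
        have hz : z = i.inv pt0 := by
          have : Subsingleton (π.obj S').obj := by
            constructor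
            intro a b
            have : i.hom a = i.hom b := Subsingleton.elim (α := s) _ _
            calc a = i.inv (i.hom a) := (congrArg (fun f => f a) i.hom_inv_id).symm
              _ = i.inv (i.hom b) := by rw [this]
              _ = b := congrArg (fun f => f b) i.hom_inv_id
          exact this.elim z _
        rw [hz]; exact hxx
      have := π.map_injective hmap
      obtain ⟨a⟩ := hne
      exact congrArg (fun f => f a) this
    · intro y
      obtain ⟨g, hg⟩ := π.map_surjective (X := S') (Y := X)
        (ObjectProperty.homMk (TypeCat.ofHom fun _ => y) : π.obj S' ⟶ π.obj X)
      obtain ⟨a⟩ := hne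
      refine ⟨g a, ?_⟩
      have : (ObjectProperty.homMk (TypeCat.ofHom fun _ => g a) : S' ⟶ X) = g := by
        ext z
        have : z = a := hss.elim z a
        rw [this]; rfl
      show π.map (ObjectProperty.homMk (TypeCat.ofHom fun _ => g a) : S' ⟶ X) (i.inv pt0) = y
      rw [this, hg]; rfl
  let eq : ∀ X : ObjectProperty.FullSubcategory P, X.obj ≃ (π.obj X).obj :=
    fun X => Equiv.ofBijective (e X) (hbij X)
  refine ⟨NatIso.ofComponents (fun X =>
    { hom := ObjectProperty.homMk (TypeCat.ofHom fun a => (eq X).symm a)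
      inv := ObjectProperty.homMk (TypeCat.ofHom fun x => eq X x)
      hom_inv_id := by ext a; exact (eq X).apply_symm_apply a
      inv_hom_id := by ext x; exact (eq X).symm_apply_apply x }) ?_⟩
  intro X Y f
  ext a
  show (eq Y).symm (π.map f a) = f ((eq X).symm a)
  have ha : a = eq X ((eq X).symm a) := ((eq X).apply_symm_apply a).symm
  rw [ha, show π.map f (eq X ((eq X).symm a)) = eq Y (f ((eq X).symm a)) from
    hnat X Y f ((eq X).symm a), (eq Y).symm_apply_apply, (eq X).apply_symm_apply]
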